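/- Let x₀ ∈ ℝ^d be nonzero with support T, C = { sgn(x₀) + u : supp u ∩ T = ∅, ‖u‖_∞ ≤ 1 }, (S_i)_{i=1}^k a partition of {1,…,d}, and Δ^v = diag(Σ_i v_i 1_{S_i}) for v ∈ ℝ_+^k. Then for every fixed u ∈ ℝ^d, the function v ↦ dist(u, Δ^v C) is convex on ℝ_+^k. -/

import Mathlib

open MeasureTheory ProbabilityTheory
open scoped Pointwise BigOperators

noncomputable section

/-- The diagonal entries of `Δ^v = diag(∑ i, v i • 𝟏_{S i})`. -/
def blockWeight {d k : ℕ} (S : Fin k → Finset (Fin d)) (v : Fin k → ℝ) (j : Fin d) : ℝ :=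
  ∑ i, if j ∈ S i then v i else 0

/-- The linear map given by the diagonal matrix `Δ^v`. -/
def deltaMap {d k : ℕ} (S : Fin k → Finset (Fin d)) (v : Fin k → ℝ)
    (p : EuclideanSpace ℝ (Fin d)) : EuclideanSpace ℝ (Fin d) :=
  WithLp.toLp 2 (fun j => blockWeight S v j * p j)

/-- The sign vector of `x₀` (with `sgn 0 = 0`). -/
def sgnVec {d : ℕ} (x₀ : EuclideanSpace ℝ (Fin d)) : EuclideanSpace ℝ (Fin d) :=
  WithLp.toLp 2 (fun j => Real.sign (x₀ j))

/-- The subdifferential of the ℓ1-norm at `x₀`: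
`C = { sgn x₀ + u : supp u ∩ supp x₀ = ∅, ‖u‖_∞ ≤ 1 }`. -/
def Cset {d : ℕ} (x₀ : EuclideanSpace ℝ (Fin d)) : Set (EuclideanSpace ℝ (Fin d)) :=
  {p | ∃ u : EuclideanSpace ℝ (Fin d),
    (∀ j, x₀ j ≠ 0 → u j = 0) ∧ (∀ j, |u j| ≤ 1) ∧ p = sgnVec x₀ + u}

lemma blockWeight_nonneg {d k : ℕ} (S : Fin k → Finset (Fin d)) {v : Fin k → ℝ}
    (hv : ∀ i, 0 ≤ v i) (j : Fin d) : 0 ≤ blockWeight S v j :=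
  Finset.sum_nonneg fun i _ => by split <;> simp [hv i]

lemma blockWeight_comb {d k : ℕ} (S : Fin k → Finset (Fin d)) (v w : Fin k → ℝ)
    (a b : ℝ) (j : Fin d) :
    blockWeight S (a • v + b • w) j = a * blockWeight S v j + b * blockWeight S w j := by
  simp only [blockWeight, Finset.mul_sum, mul_ite, mul_zero, ← Finset.sum_add_distrib]
  exact Finset.sum_congr rfl fun i _ => by split <;> simp

lemma sgnVec_mem {d : ℕ} (x₀ : EuclideanSpace ℝ (Fin d)) : sgnVec x₀ ∈ Cset x₀ :=
  ⟨0, fun _ _ => rfl, fun _ => by norm_num, by simp⟩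

lemma key {d k : ℕ} (x₀ : EuclideanSpace ℝ (Fin d)) (S : Fin k → Finset (Fin d))
    {v w : Fin k → ℝ} (hv : ∀ i, 0 ≤ v i) (hw : ∀ i, 0 ≤ w i)
    {a b : ℝ} (ha : 0 ≤ a) (hb : 0 ≤ b)
    {p q : EuclideanSpace ℝ (Fin d)} (hp : p ∈ Cset x₀) (hq : q ∈ Cset x₀) :
    ∃ r ∈ Cset x₀,
      deltaMap S (a • v + b • w) r = a • deltaMap S v p + b • deltaMap S w q := by
  obtain ⟨up, hup0, hup1, rfl⟩ := hp
  obtain ⟨uq, huq0, huq1, rfl⟩ := hq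
  set A : Fin d → ℝ := fun j => a * blockWeight S v j with hA
  set B : Fin d → ℝ := fun j => b * blockWeight S w j with hB
  have hAn : ∀ j, 0 ≤ A j := fun j => mul_nonneg ha (blockWeight_nonneg S hv j)
  have hBn : ∀ j, 0 ≤ B j := fun j => mul_nonneg hb (blockWeight_nonneg S hw j)
  refine ⟨WithLp.toLp 2 (fun j => if h : A j + B j = 0 then sgnVec x₀ j
      else (A j * (sgnVec x₀ + up) j + B j * (sgnVec x₀ + uq) j) / (A j + B j)), ?_, ?_⟩
  · refine ⟨WithLp.toLp 2 (fun j => (if h : A j + B j = 0 then sgnVec x₀ j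
      else (A j * (sgnVec x₀ + up) j + B j * (sgnVec x₀ + uq) j) / (A j + B j)) - sgnVec x₀ j),
      ?_, ?_, ?_⟩
    · intro j hj
      dsimp only
      split
      · ring
      · rename_i h
        have h1 : up j = 0 := hup0 j hj
        have h2 : uq j = 0 := huq0 j hj
        simp only [PiLp.add_apply, h1, h2, add_zero]
        field_simp
        ring
    · intro j
      dsimp only
      split
      · simp
      · rename_i h
        have hpos : 0 < A j + B j := lt_of_le_of_ne (add_nonneg (hAn j) (hBn j)) (Ne.symm h)
        rw [div_sub' (ne_of_gt hpos), abs_div, abs_of_pos hpos,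
          div_le_one hpos]
        have : A j * (sgnVec x₀ + up) j + B j * (sgnVec x₀ + uq) j - (A j + B j) * sgnVec x₀ j
            = A j * up j + B j * uq j := by simp [PiLp.add_apply]; ring
        rw [this]
        calc |A j * up j + B j * uq j| ≤ |A j * up j| + |B j * uq j| := abs_add_le _ _
          _ ≤ A j * 1 + B j * 1 := by
              have h1 : |A j * up j| ≤ A j * 1 := by
                rw [abs_mul (A j) (up j), abs_of_nonneg (hAn j)]
                exact mul_le_mul_of_nonneg_left (hup1 j) (hAn j)
              have h2 : |B j * uq j| ≤ B j * 1 := by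
                rw [abs_mul (B j) (uq j), abs_of_nonneg (hBn j)]
                exact mul_le_mul_of_nonneg_left (huq1 j) (hBn j)
              exact add_le_add h1 h2
          _ ≤ A j + B j := by ring_nf; exact le_refl _
    · ext j
      simp only [PiLp.add_apply, WithLp.ofLp_toLp]
      ring
  · ext j
    simp only [deltaMap, WithLp.ofLp_toLp, PiLp.add_apply, PiLp.smul_apply, smul_eq_mul, blockWeight_comb]
    split
    · rename_i h
      have hA0 : A j = 0 := le_antisymm (by linarith [hBn j, h.le]) (hAn j)
      have hB0 : B j = 0 := le_antisymm (by linarith [hAn j, h.le]) (hBn j)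
      have e1 : a * blockWeight S v j = 0 := hA0
      have e2 : b * blockWeight S w j = 0 := hB0
      rw [← mul_assoc, ← mul_assoc, e1, e2]
      simp
    · rename_i h
      have : blockWeight S (a • v + b • w) j = A j + B j := blockWeight_comb S v w a b j
      field_simp [hA, hB]
      ring

theorem dist_to_scaled_image_convexOn {d k : ℕ}
    (x₀ : EuclideanSpace ℝ (Fin d)) (hx₀ : x₀ ≠ 0)
    (S : Fin k → Finset (Fin d))
    (hdisj : ∀ i₁ i₂, i₁ ≠ i₂ → Disjoint (S i₁) (S i₂))
    (hcover : ∀ j, ∃ i, j ∈ S i)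
    (u : EuclideanSpace ℝ (Fin d)) :
    ConvexOn ℝ {v : Fin k → ℝ | ∀ i, 0 ≤ v i}
      (fun v => Metric.infDist u (deltaMap S v '' Cset x₀)) := by
  constructor
  · intro x hx y hy a b ha hb hab i
    exact add_nonneg (mul_nonneg ha (hx i)) (mul_nonneg hb (hy i))
  · intro v hv w hw a b ha hb hab
    simp only
    have hnev : (deltaMap S v '' Cset x₀).Nonempty :=
      ⟨_, ⟨sgnVec x₀, sgnVec_mem x₀, rfl⟩⟩
    have hnew : (deltaMap S w '' Cset x₀).Nonempty :=
      ⟨_, ⟨sgnVec x₀, sgnVec_mem x₀, rfl⟩⟩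
    refine le_of_forall_pos_le_add fun ε hε => ?_
    obtain ⟨y, hy, hylt⟩ := (Metric.infDist_lt_iff hnev).mp
      (lt_add_of_pos_right _ hε : Metric.infDist u (deltaMap S v '' Cset x₀)
        < Metric.infDist u (deltaMap S v '' Cset x₀) + ε)
    obtain ⟨z, hz, hzlt⟩ := (Metric.infDist_lt_iff hnew).mp
      (lt_add_of_pos_right _ hε : Metric.infDist u (deltaMap S w '' Cset x₀)
        < Metric.infDist u (deltaMap S w '' Cset x₀) + ε)
    obtain ⟨p, hp, rfl⟩ := hy
    obtain ⟨q, hq, rfl⟩ := hz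
    obtain ⟨r, hrC, hre⟩ := key x₀ S hv hw ha hb hp hq
    have step1 : Metric.infDist u (deltaMap S (a • v + b • w) '' Cset x₀)
        ≤ dist u (deltaMap S (a • v + b • w) r) :=
      Metric.infDist_le_dist_of_mem ⟨r, hrC, rfl⟩
    have hu : u = a • u + b • u := by rw [← add_smul, hab, one_smul]
    have step2 : dist u (deltaMap S (a • v + b • w) r)
        ≤ a * dist u (deltaMap S v p) + b * dist u (deltaMap S w q) := by
      rw [hre, dist_eq_norm, dist_eq_norm, dist_eq_norm]
      calc ‖u - (a • deltaMap S v p + b • deltaMap S w q)‖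
          = ‖a • (u - deltaMap S v p) + b • (u - deltaMap S w q)‖ := by
            have : a • (u - deltaMap S v p) + b • (u - deltaMap S w q)
                = (a + b) • u - (a • deltaMap S v p + b • deltaMap S w q) := by
              rw [smul_sub, smul_sub, add_smul]; abel
            rw [this, hab, one_smul]
        _ ≤ ‖a • (u - deltaMap S v p)‖ + ‖b • (u - deltaMap S w q)‖ := norm_add_le _ _
        _ = a * ‖u - deltaMap S v p‖ + b * ‖u - deltaMap S w q‖ := by
            rw [norm_smul, norm_smul, Real.norm_of_nonneg ha, Real.norm_of_nonneg hb]
    have hfin : a * dist u (deltaMap S v p) + b * dist u (deltaMap S w q)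
        ≤ a * (Metric.infDist u (deltaMap S v '' Cset x₀) + ε)
          + b * (Metric.infDist u (deltaMap S w '' Cset x₀) + ε) :=
      add_le_add (mul_le_mul_of_nonneg_left hylt.le ha)
        (mul_le_mul_of_nonneg_left hzlt.le hb)
    have : a * (Metric.infDist u (deltaMap S v '' Cset x₀) + ε)
          + b * (Metric.infDist u (deltaMap S w '' Cset x₀) + ε)
        = a * Metric.infDist u (deltaMap S v '' Cset x₀)
          + b * Metric.infDist u (deltaMap S w '' Cset x₀) + ε := by
      have : a * ε + b * ε = ε := by rw [← add_mul, hab, one_mul]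
      linarith
    simp only [smul_eq_mul]
    linarith

end
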